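/- The inverse connection formula: H_n(x|q) = Σ_{k=0}^{⌊n/2⌋} (−1)^k (q;q)_n · q^{k(2k−n−1)} / [(q²;q²)_k (q;q)_{n−2k}] · Ψ_{n−2k}(x) for all n ≥ 0. -/

import Mathlib

noncomputable section

def qPoch (a p : ℝ) (n : ℕ) : ℝ := ∏ j ∈ Finset.range n, (1 - a * p ^ j)

def qHermite (q : ℝ) : ℕ → ℝ → ℝ
  | 0 => fun _ => 1
  | 1 => fun x => 2 * x
  | (n + 2) => fun x => 2 * x * qHermite q (n + 1) x - (1 - q ^ (n + 1)) * qHermite q n x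

def Psi (q : ℝ) : ℕ → ℝ → ℝ
  | 0 => fun _ => 1
  | 1 => fun x => 2 * x
  | (n + 2) => fun x =>
      4 * x ^ 2 * Psi q n x - (1 - q ^ (n + 1)) * (1 - q ^ (-(n + 1) : ℤ)) * Psi q n x

lemma qPoch_succ (a p : ℝ) (n : ℕ) : qPoch a p (n+1) = qPoch a p n * (1 - a * p ^ n) :=
  Finset.prod_range_succ _ _

lemma qPoch_zero (a p : ℝ) : qPoch a p 0 = 1 := Finset.prod_range_zero _

lemma qPoch_pos {a p : ℝ} (ha0 : 0 ≤ a) (ha1 : a < 1) (hp0 : 0 ≤ p) (hp1 : p ≤ 1) (n : ℕ) :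
    0 < qPoch a p n := by
  apply Finset.prod_pos
  intro j _
  have h1 : p ^ j ≤ 1 := pow_le_one₀ hp0 hp1
  have h2 : a * p ^ j ≤ a * 1 := mul_le_mul_of_nonneg_left h1 ha0
  nlinarith

def Cc (q : ℝ) (n k : ℕ) : ℝ :=
  (-1) ^ k * qPoch q q n * q ^ ((k : ℤ) * (2 * (k : ℤ) - n - 1)) /
    (qPoch (q ^ 2) (q ^ 2) k * qPoch q q (n - 2 * k))

lemma qHermite_rec (q : ℝ) (n : ℕ) (x : ℝ) :
    qHermite q (n+2) x = 2*x*qHermite q (n+1) x - (1 - q^(n+1)) * qHermite q n x := rfl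

lemma Psi_rec (q : ℝ) (n : ℕ) (x : ℝ) :
    Psi q (n+2) x = 4*x^2*Psi q n x - (1 - q^(n+1)) * (1 - q^(-(n+1) : ℤ)) * Psi q n x := rfl

lemma qHermite_step (q : ℝ) (n : ℕ) (x : ℝ) :
    qHermite q (n+4) x = 4*x^2 * qHermite q (n+2) x
      - (2 - q^(n+3) - q^(n+2)) * qHermite q (n+2) x
      - (1 - q^(n+2)) * (1 - q^(n+1)) * qHermite q n x := by
  have h2 := qHermite_rec q n x
  have h3 := qHermite_rec q (n+1) x
  have h4 := qHermite_rec q (n+2) x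
  rw [show n+1+2 = n+3 by omega, show n+1+1 = n+2 by omega] at h3
  rw [show n+2+2 = n+4 by omega, show n+2+1 = n+3 by omega] at h4
  linear_combination h4 + 2*x*h3 + (1 - q^(n+2))*h2
lemma hP {q : ℝ} (hq0 : 0 < q) (hq1 : q < 1) (n : ℕ) : qPoch q q n ≠ 0 :=
  (qPoch_pos hq0.le hq1 hq0.le hq1.le n).ne'

lemma hE {q : ℝ} (hq0 : 0 < q) (hq1 : q < 1) (n : ℕ) : qPoch (q^2) (q^2) n ≠ 0 := by
  have h0 : (0:ℝ) ≤ q^2 := sq_nonneg q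
  have h1 : q^2 < 1 := by nlinarith
  exact (qPoch_pos h0 h1 h0 h1.le n).ne'

lemma fac_ne {q : ℝ} (hq0 : 0 < q) (hq1 : q < 1) (j : ℕ) : (1 - q * q ^ j) ≠ 0 := by
  have h := pow_le_one₀ hq0.le hq1.le (n := j)
  have : q * q ^ j < 1 := by nlinarith
  linarith

lemma fac2_ne {q : ℝ} (hq0 : 0 < q) (hq1 : q < 1) (j : ℕ) : (1 - q^2 * (q^2) ^ j) ≠ 0 := by
  have h0 : (0:ℝ) ≤ q^2 := sq_nonneg q
  have h1 : q^2 < 1 := by nlinarith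
  have h := pow_le_one₀ h0 h1.le (n := j)
  have : q^2 * (q^2) ^ j < 1 := by nlinarith
  linarith

lemma Cc_eq (q : ℝ) (hq : q ≠ 0) (n k N : ℕ)
    (h : (k : ℤ) * (2 * (k : ℤ) - n - 1) = -(N : ℤ)) :
    Cc q n k = ((-1) ^ k * qPoch q q n) /
      (qPoch (q ^ 2) (q ^ 2) k * qPoch q q (n - 2 * k) * q ^ N) := by
  unfold Cc
  rw [h, zpow_neg, zpow_natCast]
  rw [division_def, division_def, mul_inv, mul_inv]
  ring

set_option maxHeartbeats 2000000 in
lemma C_interior {q : ℝ} (hq0 : 0 < q) (hq1 : q < 1) (r t : ℕ) :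
    Cc q (r+2*t+6) (t+2) = Cc q (r+2*t+4) (t+2)
      + ((1 - q^(r+3)) * (1 - q^(-(r+3):ℤ)) - (2 - q^(r+2*t+5) - q^(r+2*t+4))) * Cc q (r+2*t+4) (t+1)
      - (1 - q^(r+2*t+4)) * (1 - q^(r+2*t+3)) * Cc q (r+2*t+2) t := by
  have hq : q ≠ 0 := hq0.ne'
  have P1 : qPoch q q (r+2*t+6) = qPoch q q (r+2*t+2) *
      ((1-q*q^(r+2*t+2))*(1-q*q^(r+2*t+3))*(1-q*q^(r+2*t+4))*(1-q*q^(r+2*t+5))) := by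
    rw [show r+2*t+6 = (r+2*t+5)+1 by omega, qPoch_succ, show r+2*t+5 = (r+2*t+4)+1 by omega,
        qPoch_succ, show r+2*t+4 = (r+2*t+3)+1 by omega, qPoch_succ,
        show r+2*t+3 = (r+2*t+2)+1 by omega, qPoch_succ]
    ring
  have P2 : qPoch q q (r+2*t+4) = qPoch q q (r+2*t+2) *
      ((1-q*q^(r+2*t+2))*(1-q*q^(r+2*t+3))) := by
    rw [show r+2*t+4 = (r+2*t+3)+1 by omega, qPoch_succ,
        show r+2*t+3 = (r+2*t+2)+1 by omega, qPoch_succ]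
    ring
  have P3 : qPoch q q (r+2) = qPoch q q r * ((1-q*q^r)*(1-q*q^(r+1))) := by
    rw [show r+2 = (r+1)+1 by omega, qPoch_succ, qPoch_succ]
    ring
  have E2 : qPoch (q^2) (q^2) (t+2) = qPoch (q^2) (q^2) t *
      ((1-q^2*(q^2)^t)*(1-q^2*(q^2)^(t+1))) := by
    rw [show t+2 = (t+1)+1 by omega, qPoch_succ, qPoch_succ]
    ring
  have E1 : qPoch (q^2) (q^2) (t+1) = qPoch (q^2) (q^2) t * (1-q^2*(q^2)^t) := qPoch_succ _ _ _
  have mu_eq : (1 - q^(r+3)) * (1 - q^(-(r+3):ℤ)) - (2 - q^(r+2*t+5) - q^(r+2*t+4)) =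
      (-(1-q^(r+3))^2 - (2 - q^(r+2*t+5) - q^(r+2*t+4)) * q^(r+3)) / q^(r+3) := by
    rw [show (-(r+3:ℤ)) = -((r+3:ℕ):ℤ) by push_cast; ring, zpow_neg, zpow_natCast]
    field_simp
    ring
  rw [Cc_eq q hq (r+2*t+6) (t+2) ((t+2)*(r+3)) (by push_cast; ring),
      Cc_eq q hq (r+2*t+4) (t+2) ((t+2)*(r+1)) (by push_cast; ring),
      Cc_eq q hq (r+2*t+4) (t+1) ((t+1)*(r+3)) (by push_cast; ring),
      Cc_eq q hq (r+2*t+2) t (t*(r+3)) (by push_cast; ring)]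
  rw [show r+2*t+6 - 2*(t+2) = r+2 by omega, show r+2*t+4 - 2*(t+2) = r by omega,
      show r+2*t+4 - 2*(t+1) = r+2 by omega, show r+2*t+2 - 2*t = r+2 by omega]
  rw [mu_eq, P1, P2, P3, E2, E1, div_mul_div_comm]
  have hf := fac_ne hq0 hq1
  have hg := fac2_ne hq0 hq1
  have hPr := hP hq0 hq1 r
  have hPm := hP hq0 hq1 (r+2*t+2)
  have hEt := hE hq0 hq1 t
  rw [div_add_div _ _ (by apply_rules [mul_ne_zero, one_ne_zero, hq, pow_ne_zero]) (by apply_rules [mul_ne_zero, one_ne_zero, hq, pow_ne_zero]),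
      ← mul_div_assoc,
      div_sub_div _ _ (by apply_rules [mul_ne_zero, one_ne_zero, hq, pow_ne_zero]) (by apply_rules [mul_ne_zero, one_ne_zero, hq, pow_ne_zero]),
      div_eq_div_iff (by apply_rules [mul_ne_zero, one_ne_zero, hq, pow_ne_zero]) (by apply_rules [mul_ne_zero, one_ne_zero, hq, pow_ne_zero])]
  ring

lemma C_zero {q : ℝ} (hq0 : 0 < q) (hq1 : q < 1) (n : ℕ) : Cc q n 0 = 1 := by
  unfold Cc
  rw [qPoch_zero]
  norm_num
  exact hP hq0 hq1 n

set_option maxHeartbeats 1000000 in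
lemma C_one {q : ℝ} (hq0 : 0 < q) (hq1 : q < 1) (m : ℕ) :
    Cc q (m+4) 1 = Cc q (m+2) 1
      + ((1 - q^(m+3)) * (1 - q^(-(m+3):ℤ)) - (2 - q^(m+3) - q^(m+2))) * Cc q (m+2) 0 := by
  have hq : q ≠ 0 := hq0.ne'
  rw [C_zero hq0 hq1, mul_one]
  have P1 : qPoch q q (m+4) = qPoch q q m *
      ((1-q*q^m)*(1-q*q^(m+1))*(1-q*q^(m+2))*(1-q*q^(m+3))) := by
    rw [show m+4 = (m+3)+1 by omega, qPoch_succ, show m+3 = (m+2)+1 by omega,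
        qPoch_succ, show m+2 = (m+1)+1 by omega, qPoch_succ, qPoch_succ]
    ring
  have P2 : qPoch q q (m+2) = qPoch q q m * ((1-q*q^m)*(1-q*q^(m+1))) := by
    rw [show m+2 = (m+1)+1 by omega, qPoch_succ, qPoch_succ]
    ring
  have E1 : qPoch (q^2) (q^2) 1 = 1 - q^2 := by
    rw [show (1:ℕ) = 0+1 from rfl, qPoch_succ, qPoch_zero]
    ring
  have mu_eq : (1 - q^(m+3)) * (1 - q^(-(m+3):ℤ)) - (2 - q^(m+3) - q^(m+2)) =
      (-(1-q^(m+3))^2 - (2 - q^(m+3) - q^(m+2)) * q^(m+3)) / q^(m+3) := by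
    rw [show (-(m+3:ℤ)) = -((m+3:ℕ):ℤ) by push_cast; ring, zpow_neg, zpow_natCast]
    field_simp
    ring
  rw [Cc_eq q hq (m+4) 1 (m+3) (by push_cast; ring),
      Cc_eq q hq (m+2) 1 (m+1) (by push_cast; ring)]
  rw [show m+4 - 2*1 = m+2 by omega, show m+2 - 2*1 = m by omega]
  rw [mu_eq, P1, P2, E1]
  have hf := fac_ne hq0 hq1
  have hPm := hP hq0 hq1 m
  have hq2 : (1:ℝ) - q^2 ≠ 0 := by
    have := fac2_ne hq0 hq1 0
    simpa using this
  rw [div_add_div _ _ (by apply_rules [mul_ne_zero, one_ne_zero, hq, pow_ne_zero]) (by apply_rules [mul_ne_zero, one_ne_zero, hq, pow_ne_zero]),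
      div_eq_div_iff (by apply_rules [mul_ne_zero, one_ne_zero, hq, pow_ne_zero]) (by apply_rules [mul_ne_zero, one_ne_zero, hq, pow_ne_zero])]
  ring

set_option maxHeartbeats 1000000 in
lemma C_top_even {q : ℝ} (hq0 : 0 < q) (hq1 : q < 1) (s : ℕ) :
    Cc q (2*s+4) (s+2) = ((1 - q^1) * (1 - q^(-1:ℤ)) - (2 - q^(2*s+3) - q^(2*s+2))) * Cc q (2*s+2) (s+1)
      - (1 - q^(2*s+2)) * (1 - q^(2*s+1)) * Cc q (2*s) s := by
  have hq : q ≠ 0 := hq0.ne'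
  have P1 : qPoch q q (2*s+4) = qPoch q q (2*s) *
      ((1-q*q^(2*s))*(1-q*q^(2*s+1))*(1-q*q^(2*s+2))*(1-q*q^(2*s+3))) := by
    rw [show 2*s+4 = (2*s+3)+1 by omega, qPoch_succ, show 2*s+3 = (2*s+2)+1 by omega,
        qPoch_succ, show 2*s+2 = (2*s+1)+1 by omega, qPoch_succ, show 2*s+1 = (2*s)+1 by omega, qPoch_succ]
    ring
  have P2 : qPoch q q (2*s+2) = qPoch q q (2*s) * ((1-q*q^(2*s))*(1-q*q^(2*s+1))) := by
    rw [show 2*s+2 = (2*s+1)+1 by omega, qPoch_succ, show 2*s+1 = (2*s)+1 by omega, qPoch_succ]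
    ring
  have E2 : qPoch (q^2) (q^2) (s+2) = qPoch (q^2) (q^2) s *
      ((1-q^2*(q^2)^s)*(1-q^2*(q^2)^(s+1))) := by
    rw [show s+2 = (s+1)+1 by omega, qPoch_succ, qPoch_succ]
    ring
  have E1 : qPoch (q^2) (q^2) (s+1) = qPoch (q^2) (q^2) s * (1-q^2*(q^2)^s) := qPoch_succ _ _ _
  have mu_eq : (1 - q^1) * (1 - q^(-1:ℤ)) - (2 - q^(2*s+3) - q^(2*s+2)) =
      (-(1-q)^2 - (2 - q^(2*s+3) - q^(2*s+2)) * q) / q := by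
    rw [show (-1:ℤ) = -((1:ℕ):ℤ) by norm_num, zpow_neg, zpow_natCast]
    field_simp
    ring
  rw [Cc_eq q hq (2*s+4) (s+2) (s+2) (by push_cast; ring),
      Cc_eq q hq (2*s+2) (s+1) (s+1) (by push_cast; ring),
      Cc_eq q hq (2*s) s s (by push_cast; ring)]
  rw [show 2*s+4 - 2*(s+2) = 0 by omega, show 2*s+2 - 2*(s+1) = 0 by omega,
      show 2*s - 2*s = 0 by omega, qPoch_zero]
  rw [mu_eq, P1, P2, E2, E1, div_mul_div_comm, ← mul_div_assoc]
  have hf := fac_ne hq0 hq1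
  have hg := fac2_ne hq0 hq1
  have hPm := hP hq0 hq1 (2*s)
  have hEs := hE hq0 hq1 s
  rw [div_sub_div _ _ (by apply_rules [mul_ne_zero, one_ne_zero, hq, pow_ne_zero]) (by apply_rules [mul_ne_zero, one_ne_zero, hq, pow_ne_zero]),
      div_eq_div_iff (by apply_rules [mul_ne_zero, one_ne_zero, hq, pow_ne_zero]) (by apply_rules [mul_ne_zero, one_ne_zero, hq, pow_ne_zero])]
  ring

set_option maxHeartbeats 1000000 in
lemma C_top_odd {q : ℝ} (hq0 : 0 < q) (hq1 : q < 1) (s : ℕ) :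
    Cc q (2*s+5) (s+2) = ((1 - q^2) * (1 - q^(-2:ℤ)) - (2 - q^(2*s+4) - q^(2*s+3))) * Cc q (2*s+3) (s+1)
      - (1 - q^(2*s+3)) * (1 - q^(2*s+2)) * Cc q (2*s+1) s := by
  have hq : q ≠ 0 := hq0.ne'
  have P1 : qPoch q q (2*s+5) = qPoch q q (2*s+1) *
      ((1-q*q^(2*s+1))*(1-q*q^(2*s+2))*(1-q*q^(2*s+3))*(1-q*q^(2*s+4))) := by
    rw [show 2*s+5 = (2*s+4)+1 by omega, qPoch_succ, show 2*s+4 = (2*s+3)+1 by omega,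
        qPoch_succ, show 2*s+3 = (2*s+2)+1 by omega, qPoch_succ, show 2*s+2 = (2*s+1)+1 by omega, qPoch_succ]
    ring
  have P2 : qPoch q q (2*s+3) = qPoch q q (2*s+1) * ((1-q*q^(2*s+1))*(1-q*q^(2*s+2))) := by
    rw [show 2*s+3 = (2*s+2)+1 by omega, qPoch_succ, show 2*s+2 = (2*s+1)+1 by omega, qPoch_succ]
    ring
  have E2 : qPoch (q^2) (q^2) (s+2) = qPoch (q^2) (q^2) s *
      ((1-q^2*(q^2)^s)*(1-q^2*(q^2)^(s+1))) := by
    rw [show s+2 = (s+1)+1 by omega, qPoch_succ, qPoch_succ]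
    ring
  have E1 : qPoch (q^2) (q^2) (s+1) = qPoch (q^2) (q^2) s * (1-q^2*(q^2)^s) := qPoch_succ _ _ _
  have mu_eq : (1 - q^2) * (1 - q^(-2:ℤ)) - (2 - q^(2*s+4) - q^(2*s+3)) =
      (-(1-q^2)^2 - (2 - q^(2*s+4) - q^(2*s+3)) * q^2) / q^2 := by
    rw [show (-2:ℤ) = -((2:ℕ):ℤ) by norm_num, zpow_neg, zpow_natCast]
    field_simp
    ring
  rw [Cc_eq q hq (2*s+5) (s+2) (2*s+4) (by push_cast; ring),
      Cc_eq q hq (2*s+3) (s+1) (2*s+2) (by push_cast; ring),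
      Cc_eq q hq (2*s+1) s (2*s) (by push_cast; ring)]
  rw [show 2*s+5 - 2*(s+2) = 1 by omega, show 2*s+3 - 2*(s+1) = 1 by omega,
      show 2*s+1 - 2*s = 1 by omega]
  rw [mu_eq, P1, P2, E2, E1, div_mul_div_comm, ← mul_div_assoc]
  have hf := fac_ne hq0 hq1
  have hg := fac2_ne hq0 hq1
  have hPm := hP hq0 hq1 (2*s+1)
  have hP1 := hP hq0 hq1 1
  have hEs := hE hq0 hq1 s
  rw [div_sub_div _ _ (by apply_rules [mul_ne_zero, one_ne_zero, hq, pow_ne_zero]) (by apply_rules [mul_ne_zero, one_ne_zero, hq, pow_ne_zero]),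
      div_eq_div_iff (by apply_rules [mul_ne_zero, one_ne_zero, hq, pow_ne_zero]) (by apply_rules [mul_ne_zero, one_ne_zero, hq, pow_ne_zero])]
  ring


set_option maxHeartbeats 4000000 in
/-- `H_n(x|q) = Σ_{k=0}^{⌊n/2⌋} (-1)^k (q;q)_n q^{k(2k-n-1)} / ((q²;q²)_k (q;q)_{n-2k}) Ψ_{n-2k}(x)`. -/
theorem qHermite_in_terms_of_Psi (q : ℝ) (hq0 : 0 < q) (hq1 : q < 1) (n : ℕ) (x : ℝ) :
    qHermite q n x =
      ∑ k ∈ Finset.range (n / 2 + 1),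
        (-1) ^ k * qPoch q q n * q ^ ((k : ℤ) * (2 * (k : ℤ) - n - 1)) /
            (qPoch (q ^ 2) (q ^ 2) k * qPoch q q (n - 2 * k)) *
          Psi q (n - 2 * k) x := by

  have hq : q ≠ 0 := hq0.ne'
  have key : ∀ N : ℕ, qHermite q N x
      = ∑ k ∈ Finset.range (N / 2 + 1), Cc q N k * Psi q (N - 2*k) x := by
    intro N
    induction N using Nat.strong_induction_on with
    | _ N ih =>
      match N, ih with
      | 0, _ =>
        simp [Finset.sum_range_one, C_zero hq0 hq1, qHermite, Psi]
      | 1, _ =>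
        simp [Finset.sum_range_one, C_zero hq0 hq1, qHermite, Psi]
      | 2, _ =>
        have hq2 : (1:ℝ) - q^2 ≠ 0 := by nlinarith
        rw [show 2/2+1 = 2 by norm_num, Finset.sum_range_succ, Finset.sum_range_one]
        rw [Cc_eq q hq 2 1 1 (by norm_num), C_zero hq0 hq1]
        norm_num [qHermite, Psi, qPoch_succ, qPoch_zero, zpow_neg, zpow_one, zpow_natCast, zpow_ofNat]
        field_simp
        ring
      | 3, _ =>
        have hq2 : (1:ℝ) - q^2 ≠ 0 := by nlinarith
        have hq1' : (1:ℝ) - q ≠ 0 := by nlinarith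
        rw [show 3/2+1 = 2 by norm_num, Finset.sum_range_succ, Finset.sum_range_one]
        rw [Cc_eq q hq 3 1 2 (by norm_num), C_zero hq0 hq1]
        norm_num [qHermite, Psi, qPoch_succ, qPoch_zero, zpow_neg, zpow_one, zpow_natCast, zpow_ofNat]
        field_simp
        ring
      | (m+4), ih =>
        have IH2 := ih (m+2) (by omega)
        have IH0 := ih m (by omega)
        rw [show (m+2)/2 + 1 = m/2+2 by omega] at IH2
        rw [show (m+4)/2 + 1 = m/2+3 by omega]
        rw [qHermite_step, IH2, IH0]
        have hAB : 4*x^2 * (∑ k ∈ Finset.range (m/2+2), Cc q (m+2) k * Psi q (m+2 - 2*k) x)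
              - (2 - q^(m+3) - q^(m+2)) * (∑ k ∈ Finset.range (m/2+2), Cc q (m+2) k * Psi q (m+2 - 2*k) x)
            = ∑ k ∈ Finset.range (m/2+2), (Cc q (m+2) k * Psi q (m+4 - 2*k) x
                + ((1 - q^(m+2-2*k+1)) * (1 - q^(-(((m+2-2*k : ℕ) : ℤ)+1))) - (2 - q^(m+3) - q^(m+2)))
                    * Cc q (m+2) k * Psi q (m+2 - 2*k) x) := by
          rw [Finset.mul_sum, Finset.mul_sum, ← Finset.sum_sub_distrib]
          apply Finset.sum_congr rfl
          intro k hk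
          have hk2 : 2*k ≤ m+2 := by have := Finset.mem_range.mp hk; omega
          have hps := Psi_rec q (m+2-2*k) x
          rw [show (m+2-2*k)+2 = m+4-2*k by omega] at hps
          linear_combination (-(Cc q (m+2) k)) * hps
        have hA : ∑ j ∈ Finset.range (m/2+3),
              (if j < m/2+2 then Cc q (m+2) j * Psi q (m+4 - 2*j) x else 0)
            = ∑ k ∈ Finset.range (m/2+2), Cc q (m+2) k * Psi q (m+4 - 2*k) x := by
          rw [Finset.sum_range_succ, if_neg (lt_irrefl _), add_zero]
          exact Finset.sum_congr rfl fun j hj => if_pos (Finset.mem_range.mp hj)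
        have hB : ∑ j ∈ Finset.range (m/2+3), (if j = 0 then 0 else
                ((1 - q^(m+2-2*(j-1)+1)) * (1 - q^(-(((m+2-2*(j-1) : ℕ) : ℤ)+1))) - (2 - q^(m+3) - q^(m+2)))
                  * Cc q (m+2) (j-1) * Psi q (m+4 - 2*j) x)
            = ∑ k ∈ Finset.range (m/2+2),
                ((1 - q^(m+2-2*k+1)) * (1 - q^(-(((m+2-2*k : ℕ) : ℤ)+1))) - (2 - q^(m+3) - q^(m+2)))
                  * Cc q (m+2) k * Psi q (m+2 - 2*k) x := by
          rw [Finset.sum_range_succ', if_pos rfl, add_zero]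
          apply Finset.sum_congr rfl
          intro k hk
          rw [if_neg (Nat.succ_ne_zero k), Nat.add_sub_cancel,
              show m+4-2*(k+1) = m+2-2*k by omega]
        have hD : ∑ j ∈ Finset.range (m/2+3), (if j < 2 then 0 else
                (1 - q^(m+2)) * (1 - q^(m+1)) * Cc q m (j-2) * Psi q (m+4 - 2*j) x)
            = (1 - q^(m+2)) * (1 - q^(m+1))
                * ∑ k ∈ Finset.range (m/2+1), Cc q m k * Psi q (m - 2*k) x := by
          rw [Finset.sum_range_succ', Finset.sum_range_succ', Finset.mul_sum]
          rw [if_pos (by norm_num), if_pos (by norm_num), add_zero, add_zero]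
          apply Finset.sum_congr rfl
          intro k hk
          rw [if_neg (by omega), show k+1+1-2 = k by omega,
              show m+4-2*(k+1+1) = m-2*k by omega]
          ring
        have hT : ∑ j ∈ Finset.range (m/2+3), Cc q (m+4) j * Psi q (m+4 - 2*j) x
            = ∑ j ∈ Finset.range (m/2+3),
                ((if j < m/2+2 then Cc q (m+2) j * Psi q (m+4 - 2*j) x else 0)
                + (if j = 0 then 0 else
                    ((1 - q^(m+2-2*(j-1)+1)) * (1 - q^(-(((m+2-2*(j-1) : ℕ) : ℤ)+1))) - (2 - q^(m+3) - q^(m+2)))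
                      * Cc q (m+2) (j-1) * Psi q (m+4 - 2*j) x)
                - (if j < 2 then 0 else
                    (1 - q^(m+2)) * (1 - q^(m+1)) * Cc q m (j-2) * Psi q (m+4 - 2*j) x)) := by
          apply Finset.sum_congr rfl
          intro j hj
          have hj3 : j < m/2+3 := Finset.mem_range.mp hj
          match j with
          | 0 =>
            rw [if_pos (by omega), if_pos rfl, if_pos (by norm_num),
                C_zero hq0 hq1, C_zero hq0 hq1]
            ring
          | 1 =>
            rw [if_pos (by omega), if_neg (by norm_num), if_pos (by norm_num)]
            rw [show (1:ℕ)-1 = 0 by norm_num]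
            rw [show m+2-2*0 = m+2 by omega, show m+2+1 = m+3 by omega,
                show m+4-2*1 = m+2 by omega]
            rw [show (-(((m+2 : ℕ) : ℤ) + 1)) = (-(m+3:ℤ)) by push_cast; ring]
            linear_combination (Psi q (m+2) x) * C_one hq0 hq1 m
          | (t+2) =>
            rw [show t+2-1 = t+1 by omega, show t+2-2 = t by omega,
                if_neg (show ¬((t+2 : ℕ) = 0) by omega), if_neg (show ¬(t+2 < 2) by omega)]
            by_cases hc : t+2 < m/2+2
            · rw [if_pos hc]
              obtain ⟨r, hr⟩ : ∃ r, m = r + 2*t + 2 := ⟨m - 2*t - 2, by omega⟩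
              subst hr
              rw [show r+2*t+2+2-2*(t+1) = r+2 by omega, show r+2+1 = r+3 by omega,
                  show r+2*t+2+4-2*(t+2) = r+2 by omega,
                  show r+2*t+2+4 = r+2*t+6 by omega, show r+2*t+2+2 = r+2*t+4 by omega,
                  show r+2*t+2+3 = r+2*t+5 by omega]
              rw [show (-(((r+2 : ℕ) : ℤ) + 1)) = (-(r+3:ℤ)) by push_cast; ring]
              linear_combination (Psi q (r+2) x) * C_interior hq0 hq1 r t
            · rw [if_neg hc]
              rcases Nat.even_or_odd' m with ⟨s, hs | hs⟩
              · rw [show t = s by omega, hs]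
                rw [show 2*s+2-2*(s+1) = 0 by omega, show 2*s+4-2*(s+2) = 0 by omega,
                    show (0:ℕ)+1 = 1 by norm_num]
                rw [show (-(((0 : ℕ) : ℤ) + 1)) = (-1 : ℤ) by norm_num]
                rw [show 2*s+3 = 2*s+3 from rfl]
                linear_combination (Psi q 0 x) * C_top_even hq0 hq1 s
              · rw [show t = s by omega, hs]
                rw [show 2*s+1+2-2*(s+1) = 1 by omega, show 2*s+1+4-2*(s+2) = 1 by omega,
                    show (1:ℕ)+1 = 2 by norm_num]
                rw [show (-(((1 : ℕ) : ℤ) + 1)) = (-2 : ℤ) by norm_num]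
                rw [show 2*s+1+4 = 2*s+5 by omega, show 2*s+1+3 = 2*s+4 by omega,
                    show 2*s+1+2 = 2*s+3 by omega, show 2*s+1+1 = 2*s+2 by omega]
                linear_combination (Psi q 1 x) * C_top_odd hq0 hq1 s
        rw [hT, Finset.sum_sub_distrib, Finset.sum_add_distrib, hA, hB, hD]
        rw [Finset.sum_add_distrib] at hAB
        linear_combination hAB
  have h := key n
  unfold Cc at h
  exact h
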